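/- Let n ≥ 1, ρ > 0, f ∈ C[0,1], and let Φ_n ∈ Π_n be the polynomial with Φ_n(j/n) = F_{n,j}^ρ(f) for j = 0,…,n. Then [F_{n,0}^ρ,…,F_{n,n}^ρ; f] = ((nρ)^{\overline{n}}/(nρ)^n) · [0, 1/n, …, (n−1)/n, 1; Φ_n], where x^{\overline{n}} = x(x+1)⋯(x+n−1) is the rising factorial and [0,1/n,…,1; Φ_n] denotes the classical divided difference of Φ_n at the nodes 0, 1/n, …, 1. -/

import Mathlib

open MeasureTheory

/-- Euler Beta function `B(a,b) = ∫₀¹ t^(a-1) (1-t)^(b-1) dt`. -/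
noncomputable def betaFn (a b : ℝ) : ℝ :=
  ∫ t in (0:ℝ)..1, t ^ (a - 1) * (1 - t) ^ (b - 1)

/-- The functionals `F_{n,k}^ρ`. -/
noncomputable def Ffun (n k : ℕ) (ρ : ℝ) (f : ℝ → ℝ) : ℝ :=
  if k = 0 then f 0
  else if k = n then f 1
  else (betaFn ((k : ℝ) * ρ) (((n : ℝ) - (k : ℝ)) * ρ))⁻¹ *
    ∫ t in (0:ℝ)..1, t ^ ((k : ℝ) * ρ - 1) * (1 - t) ^ (((n : ℝ) - (k : ℝ)) * ρ - 1) * f t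

/-- Bernstein basis polynomial `p_{n,k}(x)`. -/
noncomputable def bern (n k : ℕ) (x : ℝ) : ℝ :=
  (n.choose k : ℝ) * x ^ k * (1 - x) ^ (n - k)

/-- The operator `U_n^ρ`. -/
noncomputable def Uop (n : ℕ) (ρ : ℝ) (f : ℝ → ℝ) (x : ℝ) : ℝ :=
  ∑ k ∈ Finset.range (n + 1), Ffun n k ρ f * bern n k x

section Aux

open Polynomial

lemma cast_beta_integrand {a b t : ℝ} (h0 : 0 ≤ t) (h1 : t ≤ 1) :
    (↑(t ^ (a - 1) * (1 - t) ^ (b - 1)) : ℂ) = (t:ℂ) ^ ((a:ℂ) - 1) * (1 - (t:ℂ)) ^ ((b:ℂ) - 1) := by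
  have h1' : (0:ℝ) ≤ 1 - t := by linarith
  push_cast [Complex.ofReal_cpow h0, Complex.ofReal_cpow h1']
  norm_num

lemma betaIntegrand_intble {a b : ℝ} (ha : 0 < a) (hb : 0 < b) :
    IntervalIntegrable (fun t : ℝ => t ^ (a - 1) * (1 - t) ^ (b - 1)) volume 0 1 := by
  have hc := Complex.betaIntegral_convergent (u := (a:ℂ)) (v := (b:ℂ)) (by simpa) (by simpa)
  rw [intervalIntegrable_iff] at hc ⊢
  refine IntegrableOn.congr_fun hc.re ?_ measurableSet_uIoc
  intro t ht
  rw [Set.uIoc_of_le zero_le_one] at ht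
  have := cast_beta_integrand (a := a) (b := b) ht.1.le ht.2
  simp only [← this, RCLike.re_to_complex, Complex.ofReal_re]

lemma betaFn_eq_Gamma {a b : ℝ} (ha : 0 < a) (hb : 0 < b) :
    betaFn a b = Real.Gamma a * Real.Gamma b / Real.Gamma (a + b) := by
  have h := Complex.Gamma_mul_Gamma_eq_betaIntegral (s := (a:ℂ)) (t := (b:ℂ)) (by simpa) (by simpa)
  have h2 : Complex.betaIntegral a b = (betaFn a b : ℂ) := by
    rw [Complex.betaIntegral, betaFn, ← intervalIntegral.integral_ofReal]
    refine intervalIntegral.integral_congr ?_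
    intro t ht
    rw [Set.uIcc_of_le zero_le_one] at ht
    exact (cast_beta_integrand ht.1 ht.2).symm
  rw [h2, ← Complex.ofReal_add, Complex.Gamma_ofReal, Complex.Gamma_ofReal,
    Complex.Gamma_ofReal] at h
  have hG : Real.Gamma (a + b) ≠ 0 := (Real.Gamma_pos_of_pos (by linarith)).ne'
  have h3 : (↑(Real.Gamma a * Real.Gamma b) : ℂ) = ↑(Real.Gamma (a+b) * betaFn a b) := by
    push_cast; exact h
  have h4 := Complex.ofReal_injective h3
  field_simp
  linarith [h4]

lemma Gamma_add_nat {a : ℝ} (ha : 0 < a) (m : ℕ) :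
    Real.Gamma (a + m) = (ascPochhammer ℝ m).eval a * Real.Gamma a := by
  induction m with
  | zero => simp
  | succ m ih =>
    have h1 : a + (m + 1 : ℕ) = (a + m) + 1 := by push_cast; ring
    rw [h1, Real.Gamma_add_one (by positivity), ih, ascPochhammer_succ_eval]
    ring

lemma betaFn_pos {a b : ℝ} (ha : 0 < a) (hb : 0 < b) : 0 < betaFn a b := by
  rw [betaFn_eq_Gamma ha hb]
  have := Real.Gamma_pos_of_pos ha
  have := Real.Gamma_pos_of_pos hb
  have := Real.Gamma_pos_of_pos (by linarith : 0 < a + b)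
  positivity

lemma betaFn_add_nat {a b : ℝ} (ha : 0 < a) (hb : 0 < b) (m : ℕ) :
    betaFn (a + m) b =
      ((ascPochhammer ℝ m).eval a / (ascPochhammer ℝ m).eval (a + b)) * betaFn a b := by
  have hab : 0 < a + b := by linarith
  have h1 : a + m + b = (a + b) + m := by ring
  rw [betaFn_eq_Gamma (by positivity) hb, betaFn_eq_Gamma ha hb, h1,
    Gamma_add_nat ha m, Gamma_add_nat hab m]
  have g1 := (Real.Gamma_pos_of_pos ha).ne'
  have g2 := (Real.Gamma_pos_of_pos hab).ne'
  have p1 := (ascPochhammer_pos m _ hab).ne'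
  field_simp

lemma moment_integral {a b : ℝ} (ha : 0 < a) (m : ℕ) :
    ∫ t in (0:ℝ)..1, t ^ (a - 1) * (1 - t) ^ (b - 1) * t ^ m = betaFn (a + m) b := by
  rw [betaFn]
  refine intervalIntegral.integral_congr ?_
  intro t ht
  rw [Set.uIcc_of_le zero_le_one] at ht
  simp only
  have key : t ^ (a - 1) * t ^ m = t ^ (a + m - 1) := by
    rcases eq_or_lt_of_le ht.1 with h | h
    · subst h
      rcases Nat.eq_zero_or_pos m with hm | hm
      · simp [hm]
      · have hm1 : (1:ℝ) ≤ m := by exact_mod_cast hm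
        rw [zero_pow hm.ne', mul_zero, Real.zero_rpow (ne_of_gt (by linarith))]
    · rw [← Real.rpow_natCast t m, ← Real.rpow_add h]
      ring_nf
  calc t ^ (a - 1) * (1 - t) ^ (b - 1) * t ^ m
      = t ^ (a - 1) * t ^ m * (1 - t) ^ (b - 1) := by ring
    _ = t ^ (a + m - 1) * (1 - t) ^ (b - 1) := by rw [key]

lemma intble_mul {a b : ℝ} (ha : 0 < a) (hb : 0 < b) (m : ℕ) (c : ℝ) :
    IntervalIntegrable (fun t : ℝ => t ^ (a - 1) * (1 - t) ^ (b - 1) * (c * t ^ m))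
      volume 0 1 := by
  have h := (betaIntegrand_intble (a := a + m) (b := b) (by positivity) hb).const_mul c
  refine h.congr ?_
  intro t ht
  rw [Set.uIoc_of_le zero_le_one] at ht
  have key : t ^ (a - 1) * t ^ m = t ^ (a + m - 1) := by
    rw [← Real.rpow_natCast t m, ← Real.rpow_add ht.1]
    ring_nf
  calc c * (t ^ (a + m - 1) * (1 - t) ^ (b - 1))
      = t ^ (a + m - 1) * (1 - t) ^ (b - 1) * c := by ring
    _ = t ^ (a - 1) * t ^ m * (1 - t) ^ (b - 1) * c := by rw [key]
    _ = t ^ (a - 1) * (1 - t) ^ (b - 1) * (c * t ^ m) := by ring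

lemma Ffun_poly {n k : ℕ} (hn : 1 ≤ n) (hk : k ≤ n) {ρ : ℝ} (hρ : 0 < ρ)
    (L : Polynomial ℝ) (hLdeg : L.natDegree ≤ n) :
    Ffun n k ρ (fun x => L.eval x) = ∑ m ∈ Finset.range (n+1),
      L.coeff m * ((ascPochhammer ℝ m).eval ((k:ℝ) * ρ) /
        (ascPochhammer ℝ m).eval ((n:ℝ) * ρ)) := by
  have hn0 : (0:ℝ) < n := by exact_mod_cast hn
  have hs : 0 < (n:ℝ) * ρ := by positivity
  by_cases hk0 : k = 0
  · subst hk0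
    simp only [Ffun, if_pos rfl]
    rw [Finset.sum_eq_single 0]
    · simp [← Polynomial.coeff_zero_eq_eval_zero]
    · intro m hm hm0
      rw [Nat.cast_zero, zero_mul, ascPochhammer_ne_zero_eval_zero (S := ℝ) hm0]
      simp
    · simp
  · by_cases hkn : k = n
    · subst hkn
      simp only [Ffun, if_neg hk0, if_pos rfl]
      have := Polynomial.eval_eq_sum_range' (Nat.lt_succ_of_le hLdeg) (1:ℝ)
      rw [this]
      refine Finset.sum_congr rfl fun m _ => ?_
      rw [div_self (ascPochhammer_pos m _ hs).ne']
      simp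
    · have hk1 : 1 ≤ k := Nat.one_le_iff_ne_zero.mpr hk0
      have hkltn : k < n := lt_of_le_of_ne hk hkn
      set a : ℝ := (k:ℝ) * ρ with ha_def
      set b : ℝ := ((n:ℝ) - (k:ℝ)) * ρ with hb_def
      have hkpos : (0:ℝ) < k := by exact_mod_cast hk1
      have hklt : (k:ℝ) < (n:ℝ) := by exact_mod_cast hkltn
      have ha : 0 < a := by positivity
      have hb : 0 < b := by
        rw [hb_def]
        have h2 : (0:ℝ) < (n:ℝ) - k := by linarith
        exact mul_pos h2 hρ
      have hab : a + b = (n:ℝ) * ρ := by rw [ha_def, hb_def]; ring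
      simp only [Ffun, if_neg hk0, if_neg hkn]
      have hint : ∫ t in (0:ℝ)..1, t ^ (a - 1) * (1 - t) ^ (b - 1) * L.eval t
          = ∑ m ∈ Finset.range (n+1), L.coeff m * betaFn (a + m) b := by
        have hev : ∀ t : ℝ, t ^ (a - 1) * (1 - t) ^ (b - 1) * L.eval t =
            ∑ m ∈ Finset.range (n+1),
              t ^ (a - 1) * (1 - t) ^ (b - 1) * (L.coeff m * t ^ m) := by
          intro t
          rw [Polynomial.eval_eq_sum_range' (Nat.lt_succ_of_le hLdeg) t, Finset.mul_sum]
        simp_rw [hev]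
        rw [intervalIntegral.integral_finset_sum (fun m _ => intble_mul ha hb m (L.coeff m))]
        refine Finset.sum_congr rfl fun m _ => ?_
        have : ∀ t : ℝ, t ^ (a - 1) * (1 - t) ^ (b - 1) * (L.coeff m * t ^ m) =
            L.coeff m * (t ^ (a - 1) * (1 - t) ^ (b - 1) * t ^ m) := fun t => by ring
        simp_rw [this]
        rw [intervalIntegral.integral_const_mul, moment_integral ha m]
      rw [hint, Finset.mul_sum]
      refine Finset.sum_congr rfl fun m _ => ?_
      rw [betaFn_add_nat ha hb m, hab]
      have hB := (betaFn_pos ha hb).ne'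
      set B := betaFn a b with hB_def
      have hA' := (ascPochhammer_pos m _ hs).ne'
      field_simp

lemma leadingCoeff_lagrange_basis {v : ℕ → ℝ} {s : Finset ℕ} (i : ℕ) :
    (Lagrange.basis s v i).leadingCoeff = ∏ j ∈ s.erase i, (v i - v j)⁻¹ := by
  rw [Lagrange.basis, leadingCoeff_prod]
  refine Finset.prod_congr rfl fun j _ => ?_
  rw [Lagrange.basisDivisor, leadingCoeff_mul, leadingCoeff_C, (monic_X_sub_C (v j)).leadingCoeff,
    mul_one]

lemma divided_difference_eq_coeff (n : ℕ) (v : ℕ → ℝ)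
    (hv : Set.InjOn v (Finset.range (n+1))) (P : Polynomial ℝ) (hP : P.natDegree ≤ n) :
    ∑ i ∈ Finset.range (n+1),
      P.eval (v i) / ∏ j ∈ (Finset.range (n+1)).erase i, (v i - v j) = P.coeff n := by
  have hcard : (Finset.range (n+1)).card = n + 1 := Finset.card_range _
  have hdeg : P.degree < (Finset.range (n+1)).card := by
    rw [hcard]
    exact lt_of_le_of_lt degree_le_natDegree (by exact_mod_cast Nat.lt_succ_of_le hP)
  have hint := Lagrange.eq_interpolate hv hdeg
  conv_rhs => rw [hint]
  rw [Lagrange.interpolate_apply, finset_sum_coeff]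
  refine Finset.sum_congr rfl fun i hi => ?_
  rw [coeff_C_mul]
  have hnd : (Lagrange.basis (Finset.range (n+1)) v i).natDegree = n := by
    rw [Lagrange.natDegree_basis hv hi, hcard]; omega
  have hcf : (Lagrange.basis (Finset.range (n+1)) v i).coeff n =
      (Lagrange.basis (Finset.range (n+1)) v i).leadingCoeff := by
    rw [leadingCoeff, hnd]
  rw [hcf, leadingCoeff_lagrange_basis, div_eq_mul_inv, Finset.prod_inv_distrib]

lemma asc_comp_eval (s : ℝ) (m : ℕ) (x : ℝ) :
    ((ascPochhammer ℝ m).comp (C s * X)).eval x = (ascPochhammer ℝ m).eval (s * x) := by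
  rw [eval_comp, eval_mul, eval_C, eval_X]

lemma asc_comp_natDegree {s : ℝ} (hs : s ≠ 0) (m : ℕ) :
    ((ascPochhammer ℝ m).comp (C s * X)).natDegree = m := by
  rw [natDegree_comp, ascPochhammer_natDegree, natDegree_C_mul_X _ hs, mul_one]

lemma asc_comp_coeff_self {s : ℝ} (hs : s ≠ 0) (m : ℕ) :
    ((ascPochhammer ℝ m).comp (C s * X)).coeff m = s ^ m := by
  have h1 : ((ascPochhammer ℝ m).comp (C s * X)).coeff m =
      ((ascPochhammer ℝ m).comp (C s * X)).leadingCoeff := by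
    rw [leadingCoeff, asc_comp_natDegree hs]
  have h2 : natDegree (C s * X) ≠ 0 := by rw [natDegree_C_mul_X _ hs]; exact one_ne_zero
  rw [h1, leadingCoeff_comp h2, (monic_ascPochhammer ℝ m).leadingCoeff, one_mul,
    ascPochhammer_natDegree]
  have : (C s * X).leadingCoeff = s := by
    rw [leadingCoeff_mul, leadingCoeff_C, leadingCoeff_X, mul_one]
  rw [this]

end Aux

open Polynomial in
/-- `[F_{n,0}^ρ,…,F_{n,n}^ρ; f] = ((nρ)^{rising n}/(nρ)^n) · [0, 1/n, …, 1; Φ_n]`,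
where `Φ_n ∈ Π_n` satisfies `Φ_n(j/n) = F_{n,j}^ρ(f)` and the classical divided
difference is `[x₀,…,x_n; g] = ∑ᵢ g(xᵢ)/∏_{j≠i}(xᵢ−x_j)`. -/
theorem coeff_L_eq_risingFactorial_mul_dividedDifference
    (n : ℕ) (hn : 1 ≤ n) (ρ : ℝ) (hρ : 0 < ρ)
    (f : ℝ → ℝ) (hf : ContinuousOn f (Set.Icc 0 1))
    (L : Polynomial ℝ) (hLdeg : L.natDegree ≤ n)
    (hL : ∀ k ≤ n, Ffun n k ρ (fun x => L.eval x) = Ffun n k ρ f)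
    (Φ : Polynomial ℝ) (hΦdeg : Φ.natDegree ≤ n)
    (hΦ : ∀ j ≤ n, Φ.eval ((j : ℝ) / (n : ℝ)) = Ffun n j ρ f) :
    L.coeff n =
      ((ascPochhammer ℝ n).eval ((n : ℝ) * ρ) / ((n : ℝ) * ρ) ^ n) *
        ∑ i ∈ Finset.range (n + 1),
          Φ.eval ((i : ℝ) / (n : ℝ)) /
            ∏ j ∈ (Finset.range (n + 1)).erase i, ((i : ℝ) / (n : ℝ) - (j : ℝ) / (n : ℝ)) := by
  have hn0 : (0:ℝ) < n := by exact_mod_cast hn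
  set s : ℝ := (n:ℝ) * ρ with hs_def
  have hs : 0 < s := by positivity
  have hsne : s ≠ 0 := hs.ne'
  -- injectivity of nodes
  have hvInj : Set.InjOn (fun i : ℕ => (i:ℝ) / (n:ℝ)) (Finset.range (n+1)) := by
    intro i _ j _ h
    have : (i:ℝ) = j := by field_simp at h; exact_mod_cast h
    exact_mod_cast this
  -- the polynomial Ψ
  set Ψ : Polynomial ℝ := ∑ m ∈ Finset.range (n+1),
      C (L.coeff m / (ascPochhammer ℝ m).eval s) * ((ascPochhammer ℝ m).comp (C s * X))
    with hΨ_def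
  have hΨeval : ∀ x : ℝ, Ψ.eval x = ∑ m ∈ Finset.range (n+1),
      L.coeff m * ((ascPochhammer ℝ m).eval (s * x) / (ascPochhammer ℝ m).eval s) := by
    intro x
    rw [hΨ_def, eval_finset_sum]
    refine Finset.sum_congr rfl fun m _ => ?_
    rw [eval_mul, eval_C, asc_comp_eval]
    ring
  have hΨdeg : Ψ.natDegree ≤ n := by
    refine natDegree_sum_le_of_forall_le _ _ fun m hm => ?_
    refine le_trans (natDegree_C_mul_le _ _) ?_
    rw [asc_comp_natDegree hsne]
    exact Nat.lt_succ_iff.mp (Finset.mem_range.mp hm)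
  have hΨcoeff : Ψ.coeff n = L.coeff n / (ascPochhammer ℝ n).eval s * s ^ n := by
    rw [hΨ_def, finset_sum_coeff]
    rw [Finset.sum_eq_single n]
    · rw [coeff_C_mul, asc_comp_coeff_self hsne]
    · intro m hm hmn
      have hz : ((ascPochhammer ℝ m).comp (C s * X)).coeff n = 0 := by
        apply coeff_eq_zero_of_natDegree_lt
        rw [asc_comp_natDegree hsne]
        exact lt_of_le_of_ne (Nat.lt_succ_iff.mp (Finset.mem_range.mp hm)) hmn
      rw [coeff_C_mul, hz, mul_zero]
    · intro h
      exact absurd (Finset.self_mem_range_succ n) h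
  -- Φ = Ψ
  have hΦΨ : Φ = Ψ := by
    refine Polynomial.eq_of_degrees_lt_of_eval_index_eq (Finset.range (n+1))
      (v := fun i : ℕ => (i:ℝ) / (n:ℝ)) hvInj ?_ ?_ ?_
    · rw [Finset.card_range]
      exact lt_of_le_of_lt degree_le_natDegree (by exact_mod_cast Nat.lt_succ_of_le hΦdeg)
    · rw [Finset.card_range]
      exact lt_of_le_of_lt degree_le_natDegree (by exact_mod_cast Nat.lt_succ_of_le hΨdeg)
    · intro i hi
      have hi' : i ≤ n := Nat.lt_succ_iff.mp (Finset.mem_range.mp hi)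
      have h1 : Φ.eval ((i:ℝ)/(n:ℝ)) = Ffun n i ρ (fun x => L.eval x) := by
        rw [hΦ i hi', hL i hi']
      rw [h1, Ffun_poly hn hi' hρ L hLdeg, hΨeval]
      refine Finset.sum_congr rfl fun m _ => ?_
      have : s * ((i:ℝ)/(n:ℝ)) = (i:ℝ) * ρ := by
        rw [hs_def]; field_simp
      rw [this]
  -- conclude
  rw [divided_difference_eq_coeff n (fun i : ℕ => (i:ℝ)/(n:ℝ)) hvInj Φ hΦdeg, hΦΨ, hΨcoeff]
  have hasc := (ascPochhammer_pos n _ hs).ne'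
  have hsn : s ^ n ≠ 0 := pow_ne_zero _ hsne
  field_simp
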